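/- Let R be a commutative ring, A and B finite multisets of elements of R, and a, b ∈ R. Then for every integer n ≥ 1, the complementary symmetric function satisfies the recursion comp_n(A + {a}; B + {b}) = comp_n(A; B) + (b − a) · comp_{n−1}(A; B + {b}), where A + {a} denotes the multiset A with one extra copy of a adjoined (similarly B + {b}). -/

import Mathlib

/-- `h_n(B)`: the complete homogeneous symmetric function of degree `n` in the
elements of the multiset `B`, defined as the coefficient of `t^n` in
`∏_{b ∈ B} (1 + b t + b² t² + ⋯) = ∏_{b ∈ B} 1/(1 - b t)`. -/
noncomputable def hsymmM {R : Type*} [CommRing R] (B : Multiset R) (n : ℕ) : R :=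
  PowerSeries.coeff n ((B.map fun b => PowerSeries.mk fun k => b ^ k).prod)

/-- `e_k(A)`: the elementary symmetric function of degree `k` in the elements of
the multiset `A`. -/
def esymmM {R : Type*} [CommRing R] (A : Multiset R) (k : ℕ) : R :=
  ((A.powersetCard k).map Multiset.prod).sum

/-- The complementary symmetric function `comp_n(A;B) = ∑_{j=0}^n (-1)^j e_j(A) h_{n-j}(B)`. -/
noncomputable def compM {R : Type*} [CommRing R] (A B : Multiset R) (n : ℕ) : R :=
  ∑ j ∈ Finset.range (n + 1), (-1 : R) ^ j * esymmM A j * hsymmM B (n - j)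

open PowerSeries

noncomputable def Eser {R : Type*} [CommRing R] (A : Multiset R) : PowerSeries R :=
  (A.map fun a => 1 - PowerSeries.C a * PowerSeries.X).prod

noncomputable def Hser {R : Type*} [CommRing R] (B : Multiset R) : PowerSeries R :=
  (B.map fun b => PowerSeries.mk fun k => b ^ k).prod

lemma coeff_Eser {R : Type*} [CommRing R] (A : Multiset R) (j : ℕ) :
    PowerSeries.coeff j (Eser A) = (-1 : R) ^ j * esymmM A j := by
  induction A using Multiset.induction generalizing j with
  | empty =>
    cases j with
    | zero => simp [Eser, esymmM]
    | succ j => simp [Eser, esymmM, Multiset.powersetCard_zero_right, coeff_one]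
  | cons a A ih =>
    have hE : Eser (a ::ₘ A) = (1 - PowerSeries.C a * PowerSeries.X) * Eser A := by
      simp [Eser]
    cases j with
    | zero =>
      have h0 : ∀ s : Multiset R, esymmM s 0 = 1 := fun s => by
        simp [esymmM, Multiset.powersetCard_zero_left]
      rw [hE, PowerSeries.coeff_zero_eq_constantCoeff, map_mul, map_sub, map_one, map_mul,
        PowerSeries.constantCoeff_X, mul_zero, sub_zero, one_mul,
        ← PowerSeries.coeff_zero_eq_constantCoeff, ih 0, h0, h0]
    | succ j =>
      rw [hE, sub_mul, one_mul, map_sub, mul_assoc, PowerSeries.coeff_C_mul,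
        PowerSeries.coeff_succ_X_mul, ih, ih]
      have he : esymmM (a ::ₘ A) (j + 1) = esymmM A (j + 1) + a * esymmM A j := by
        simp only [esymmM, Multiset.powersetCard_cons, Multiset.map_add, Multiset.sum_add,
          Multiset.map_map]
        congr 1
        rw [← Multiset.sum_map_mul_left]
        congr 1
        exact Multiset.map_congr rfl fun s _ => by simp [Multiset.prod_cons]
      rw [he]
      ring

lemma comp_eq {R : Type*} [CommRing R] (A B : Multiset R) (n : ℕ) :
    compM A B n = PowerSeries.coeff n (Eser A * Hser B) := by
  rw [PowerSeries.coeff_mul, Finset.Nat.sum_antidiagonal_eq_sum_range_succ_mk]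
  unfold compM
  refine Finset.sum_congr rfl fun j _ => ?_
  rw [coeff_Eser]
  rfl

lemma mkb_eq {R : Type*} [CommRing R] (b : R) :
    (PowerSeries.mk fun k => b ^ k) =
      1 + PowerSeries.C b * PowerSeries.X * PowerSeries.mk fun k => b ^ k := by
  ext k
  cases k with
  | zero => simp
  | succ k =>
    rw [map_add, mul_assoc, PowerSeries.coeff_C_mul, PowerSeries.coeff_succ_X_mul]
    simp [PowerSeries.coeff_one, pow_succ, mul_comm]

theorem stmt3 {R : Type*} [CommRing R] (A B : Multiset R) (a b : R) (n : ℕ) (hn : 1 ≤ n) :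
    compM (a ::ₘ A) (b ::ₘ B) n = compM A B n + (b - a) * compM A (b ::ₘ B) (n - 1) := by
  obtain ⟨m, rfl⟩ : ∃ m, n = m + 1 := ⟨n - 1, (Nat.succ_pred_eq_of_pos hn).symm⟩
  have key : Eser (a ::ₘ A) * Hser (b ::ₘ B) =
      Eser A * Hser B +
        PowerSeries.C (b - a) * PowerSeries.X * (Eser A * Hser (b ::ₘ B)) := by
    have hE : Eser (a ::ₘ A) = (1 - PowerSeries.C a * PowerSeries.X) * Eser A := by
      simp [Eser]
    have hH : Hser (b ::ₘ B) = (PowerSeries.mk fun k => b ^ k) * Hser B := by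
      simp [Hser]
    rw [hE, hH, map_sub]
    linear_combination (Eser A * Hser B) * (mkb_eq b)
  rw [comp_eq, comp_eq, comp_eq, key, map_add]
  congr 1
  simp only [Nat.add_sub_cancel]
  rw [mul_assoc, PowerSeries.coeff_C_mul, PowerSeries.coeff_succ_X_mul]
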